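/- Let X₀, X₁, X₂, X₃ be pairwise distinct points of E. Then the four points lie on a circle or line if and only if the 3×4 matrix whose i-th row (i = 0, 1, 2) is (‖X_i‖² − ‖X_{i+1}‖², (X_i − X_{i+1})ᵀ) has rank at most 2 (the rows being the coordinate vectors of the bisector planes of consecutive pairs of points; rank at most 2 expresses that the three bisector planes belong to a pencil, i.e., share a common line, possibly at infinity). -/

import Mathlib

noncomputable section

abbrev E : Type := EuclideanSpace ℝ (Fin 3)

/-- A line: a one-dimensional affine subspace. -/
def IsLine (s : AffineSubspace ℝ E) : Prop := Module.finrank ℝ s.direction = 1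

/-- A plane: a two-dimensional affine subspace. -/
def IsPlane (s : AffineSubspace ℝ E) : Prop := Module.finrank ℝ s.direction = 2

/-- A set of points lies on a circle or a line: it is concyclic (contained in the
intersection of a sphere and a plane) or collinear. -/
def ConcyclicOrCollinear (s : Set E) : Prop :=
  EuclideanGeometry.Concyclic s ∨ Collinear ℝ s

/-- `τ` is a rotation with axis `r`: an isometry different from the identity whose
linear part has determinant 1 and which fixes every point of the line `r`. -/
def IsRotation (τ : E ≃ᵃⁱ[ℝ] E) (r : AffineSubspace ℝ E) : Prop :=
  τ ≠ AffineIsometryEquiv.refl ℝ E ∧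
  LinearMap.det (τ.linearIsometryEquiv.toLinearEquiv : E →ₗ[ℝ] E) = 1 ∧
  IsLine r ∧ ∀ x ∈ r, τ x = x

/-- `(α 0, α 1, α 2, α 3)` is a rotation quadrangle with relative revolute axes
`r i` (in the moving space): each relative displacement `τ_{i,i+1} = α (i+1) ∘ (α i)⁻¹`
is a rotation whose axis is the image `α i (r i)`. -/
def IsRotationQuadrangle (α : Fin 4 → (E ≃ᵃⁱ[ℝ] E)) (r : Fin 4 → AffineSubspace ℝ E) : Prop :=
  ∀ i : Fin 4,
    IsRotation ((α i).symm.trans (α (i + 1)))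
      ((r i).map (α i).toAffineIsometry.toAffineMap)

open Module Submodule RealInnerProductSpace in
lemma aux_chain_const {G : E → ℝ} {X : Fin 4 → E}
    (h : ∀ i : Fin 3, G (X i.castSucc) = G (X i.succ)) (j : Fin 4) :
    G (X j) = G (X 0) := by
  have h0 : G (X 0) = G (X 1) := h 0
  have h1 : G (X 1) = G (X 2) := h 1
  have h2 : G (X 2) = G (X 3) := h 2
  fin_cases j <;> simp_all

open Module Submodule RealInnerProductSpace in
lemma aux_cospherical {s : Set E} {a : ℝ} {b : E} {k : ℝ} (ha : a ≠ 0)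
    (h : ∀ p ∈ s, a * ‖p‖ ^ 2 + ⟪p, b⟫ = k) : EuclideanGeometry.Cospherical s := by
  refine ⟨(-(2 * a))⁻¹ • b, Real.sqrt (k / a + ‖(-(2 * a))⁻¹ • b‖ ^ 2), fun p hp => ?_⟩
  set c : E := (-(2 * a))⁻¹ • b with hc
  have hpc : ‖p - c‖ ^ 2 = k / a + ‖c‖ ^ 2 := by
    have h1 : ‖p - c‖ ^ 2 = ‖p‖ ^ 2 - 2 * ⟪p, c⟫ + ‖c‖ ^ 2 := norm_sub_sq_real p c
    have h2 : ⟪p, c⟫ = (-(2 * a))⁻¹ * ⟪p, b⟫ := real_inner_smul_right p b _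
    have h3 : a * ‖p‖ ^ 2 + ⟪p, b⟫ = k := h p hp
    rw [h1, h2]
    have h4 : ⟪p, b⟫ = k - a * ‖p‖ ^ 2 := by linarith
    rw [h4]
    field_simp
    ring
  rw [dist_eq_norm, ← Real.sqrt_sq (norm_nonneg (p - c)), hpc]

open Module Submodule RealInnerProductSpace in
lemma aux_mem_orthogonal_span {S : Set E} {x : E} (h : ∀ u ∈ S, ⟪u, x⟫ = 0) :
    x ∈ (Submodule.span ℝ S)ᗮ := by
  rw [Submodule.mem_orthogonal]
  intro u hu
  induction hu using Submodule.span_induction with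
  | mem u hu => exact h u hu
  | zero => simp
  | add u v _ _ h1 h2 => simp [inner_add_left, h1, h2]
  | smul r u _ h1 => simp [inner_smul_left, h1]

open Module Submodule RealInnerProductSpace in
lemma aux_vectorSpan_le {s : Set E} {S : Set E}
    (h : ∀ u ∈ S, ∀ p ∈ s, ∀ q ∈ s, ⟪u, p - q⟫ = 0) :
    vectorSpan ℝ s ≤ (Submodule.span ℝ S)ᗮ := by
  rw [vectorSpan_def, Submodule.span_le]
  rintro v ⟨p, hp, q, hq, rfl⟩
  exact aux_mem_orthogonal_span fun u hu => h u hu p hp q hq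

open Module Submodule RealInnerProductSpace in
lemma aux_coplanar {s : Set E} {b : E} (hb : b ≠ 0) {k : ℝ}
    (h : ∀ p ∈ s, ⟪p, b⟫ = k) : Coplanar ℝ s := by
  have hle : vectorSpan ℝ s ≤ (Submodule.span ℝ ({b} : Set E))ᗮ := by
    apply aux_vectorSpan_le
    rintro u rfl p hp q hq
    rw [real_inner_comm, inner_sub_left, h p hp, h q hq, sub_self]
  have horth : finrank ℝ ((Submodule.span ℝ ({b} : Set E))ᗮ : Submodule ℝ E) = 2 := by
    have h1 := (Submodule.span ℝ ({b} : Set E)).finrank_add_finrank_orthogonal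
    rw [finrank_span_singleton hb] at h1
    have h3 : finrank ℝ E = 3 := finrank_euclideanSpace_fin
    omega
  rw [coplanar_iff_finrank_le_two]
  calc finrank ℝ (vectorSpan ℝ s) ≤ _ := Submodule.finrank_mono hle
    _ ≤ 2 := le_of_eq horth

open Module Submodule RealInnerProductSpace in
lemma aux_collinear {s : Set E} {b : Fin 2 → E} (hb : LinearIndependent ℝ b)
    {k : Fin 2 → ℝ} (h : ∀ i, ∀ p ∈ s, ⟪p, b i⟫ = k i) : Collinear ℝ s := by
  have hle : vectorSpan ℝ s ≤ (Submodule.span ℝ (Set.range b))ᗮ := by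
    apply aux_vectorSpan_le
    rintro u ⟨i, rfl⟩ p hp q hq
    rw [real_inner_comm, inner_sub_left, h i p hp, h i q hq, sub_self]
  have horth : finrank ℝ ((Submodule.span ℝ (Set.range b))ᗮ : Submodule ℝ E) = 1 := by
    have h1 := (Submodule.span ℝ (Set.range b)).finrank_add_finrank_orthogonal
    rw [finrank_span_eq_card hb] at h1
    have h3 : finrank ℝ E = 3 := finrank_euclideanSpace_fin
    simp only [Fintype.card_fin] at h1
    omega
  rw [collinear_iff_finrank_le_one]
  calc finrank ℝ (vectorSpan ℝ s) ≤ _ := Submodule.finrank_mono hle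
    _ ≤ 1 := le_of_eq horth

/-- Four pairwise distinct points lie on a circle or line iff the 3×4
matrix whose `i`-th row is `(‖X i‖² − ‖X (i+1)‖², (X i − X (i+1))ᵀ)` — the coordinate
vectors of the bisector planes of consecutive pairs — has rank at most 2. -/
theorem concyclic_iff_bisector_matrix_rank_le_two
    (X : Fin 4 → E) (hdist : Function.Injective X)
    (M : Matrix (Fin 3) (Fin 4) ℝ)
    (hM : ∀ (i : Fin 3) (j : Fin 4), M i j =
      Fin.cases (‖X i.castSucc‖ ^ 2 - ‖X i.succ‖ ^ 2)
        (fun k : Fin 3 => (X i.castSucc - X i.succ) k) j) :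
    ConcyclicOrCollinear (Set.range X) ↔ M.rank ≤ 2 := by
  classical
  have hrank : M.rank = Module.finrank ℝ (Submodule.span ℝ (Set.range M)) :=
    Matrix.rank_eq_finrank_span_row M
  rw [hrank]
  constructor
  · -- forward
    rintro (⟨⟨c, R, hcR⟩, hcop⟩ | hcol)
    · -- concyclic
      set g : E →ₗ[ℝ] (Fin 4 → ℝ) :=
        LinearMap.pi (Fin.cons ((2 : ℝ) • (innerₛₗ ℝ c))
          (fun k => PiLp.projₗ 2 (fun _ : Fin 3 => ℝ) k)) with hg
      have hrow : ∀ i : Fin 3, M i = g (X i.castSucc - X i.succ) := by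
        intro i
        funext j
        rw [hM]
        refine Fin.cases ?_ (fun k => ?_) j
        · have e1 : ‖X i.castSucc - c‖ = ‖X i.succ - c‖ := by
            rw [← dist_eq_norm, ← dist_eq_norm, hcR _ (Set.mem_range_self _),
              hcR _ (Set.mem_range_self _)]
          have e2 : ‖X i.castSucc - c‖ ^ 2 = ‖X i.succ - c‖ ^ 2 := by rw [e1]
          rw [norm_sub_sq_real, norm_sub_sq_real] at e2
          have e3 : inner ℝ (X i.castSucc - X i.succ) c =
              (inner ℝ (X i.castSucc) c : ℝ) - inner ℝ (X i.succ) c := inner_sub_left _ _ _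
          simp only [Fin.cases_zero, hg, LinearMap.pi_apply, Fin.cons_zero, LinearMap.smul_apply,
            innerₛₗ_apply_apply, smul_eq_mul]
          have e4 : (inner ℝ c (X i.castSucc - X i.succ) : ℝ) =
              inner ℝ (X i.castSucc) c - inner ℝ (X i.succ) c := by
            rw [real_inner_comm]; exact e3
          linarith
        · simp [hg, Fin.cases_succ]
      have hle : Submodule.span ℝ (Set.range M) ≤
          (vectorSpan ℝ (Set.range X)).map g := by
        rw [Submodule.span_le]
        rintro _ ⟨i, rfl⟩
        exact ⟨X i.castSucc - X i.succ,
          vsub_mem_vectorSpan ℝ (Set.mem_range_self _) (Set.mem_range_self _), (hrow i).symm⟩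
      calc Module.finrank ℝ (Submodule.span ℝ (Set.range M))
          ≤ Module.finrank ℝ ((vectorSpan ℝ (Set.range X)).map g) := Submodule.finrank_mono hle
        _ ≤ Module.finrank ℝ (vectorSpan ℝ (Set.range X)) := Submodule.finrank_map_le g _
        _ ≤ 2 := hcop.finrank_le_two
    · -- collinear
      set g : E →ₗ[ℝ] (Fin 4 → ℝ) :=
        LinearMap.pi (Fin.cons (0 : E →ₗ[ℝ] ℝ)
          (fun k => PiLp.projₗ 2 (fun _ : Fin 3 => ℝ) k)) with hg
      set e₀ : Fin 4 → ℝ := Pi.single 0 1 with he₀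
      have he₀ne : e₀ ≠ 0 := by
        intro h
        have h1 := congrFun h 0
        simp [he₀] at h1
      set U : Submodule ℝ (Fin 4 → ℝ) :=
        (Submodule.span ℝ {e₀}) ⊔ (vectorSpan ℝ (Set.range X)).map g with hU
      have hrow : ∀ i : Fin 3, M i = (M i 0) • e₀ + g (X i.castSucc - X i.succ) := by
        intro i
        funext j
        refine Fin.cases ?_ (fun k => ?_) j
        · simp [hg, he₀, hM]
        · simp [hg, he₀, hM, Fin.succ_ne_zero, Pi.single_eq_of_ne]
      have hle : Submodule.span ℝ (Set.range M) ≤ U := by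
        rw [Submodule.span_le]
        rintro _ ⟨i, rfl⟩
        rw [hrow i]
        exact Submodule.add_mem _
          (Submodule.mem_sup_left (Submodule.smul_mem _ _
            (Submodule.subset_span (Set.mem_singleton _))))
          (Submodule.mem_sup_right ⟨X i.castSucc - X i.succ,
            vsub_mem_vectorSpan ℝ (Set.mem_range_self _) (Set.mem_range_self _), rfl⟩)
      have hU2 : Module.finrank ℝ U ≤ 2 := by
        calc Module.finrank ℝ U
            ≤ Module.finrank ℝ (Submodule.span ℝ ({e₀} : Set (Fin 4 → ℝ))) +
              Module.finrank ℝ ((vectorSpan ℝ (Set.range X)).map g) :=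
              Submodule.finrank_add_le_finrank_add_finrank _ _
          _ ≤ 1 + 1 := by
              gcongr
              · exact le_of_eq (finrank_span_singleton he₀ne)
              · exact le_trans (Submodule.finrank_map_le g _) hcol.finrank_le_one
          _ = 2 := rfl
      exact le_trans (Submodule.finrank_mono hle) hU2
  · -- backward
    intro h2
    set L : (Fin 4 → ℝ) ≃ₗ[ℝ] EuclideanSpace ℝ (Fin 4) :=
      (WithLp.linearEquiv 2 ℝ (Fin 4 → ℝ)).symm with hL
    set T : Submodule ℝ (EuclideanSpace ℝ (Fin 4)) :=
      (Submodule.span ℝ (Set.range M)).map (L : (Fin 4 → ℝ) →ₗ[ℝ] EuclideanSpace ℝ (Fin 4))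
      with hT
    have hTrank : Module.finrank ℝ T ≤ 2 := by
      rw [hT, LinearEquiv.finrank_map_eq]
      exact h2
    have hTorth : 2 ≤ Module.finrank ℝ (Tᗮ : Submodule ℝ (EuclideanSpace ℝ (Fin 4))) := by
      have h4 := T.finrank_add_finrank_orthogonal
      have h5 : Module.finrank ℝ (EuclideanSpace ℝ (Fin 4)) = 4 := finrank_euclideanSpace_fin
      omega
    obtain ⟨y, hy⟩ := exists_linearIndependent_of_le_finrank (R := ℝ) (M := Tᗮ) hTorth
    set Y : Fin 2 → EuclideanSpace ℝ (Fin 4) := fun i => (y i : EuclideanSpace ℝ (Fin 4))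
      with hYdef
    have hYmem : ∀ i, Y i ∈ Tᗮ := fun i => (y i).2
    have hY : LinearIndependent ℝ Y := hy.map' Tᗮ.subtype (Submodule.ker_subtype _)
    have hpair : ∀ c d : ℝ, c • Y 0 + d • Y 1 = 0 → c = 0 ∧ d = 0 := by
      intro c d hcd
      have := Fintype.linearIndependent_iff.mp hY ![c, d]
        (by simpa [Fin.sum_univ_two] using hcd)
      exact ⟨this 0, this 1⟩
    -- the tail of a vector, as element of E
    set bvec : EuclideanSpace ℝ (Fin 4) → E :=
      fun z => (WithLp.equiv 2 (Fin 3 → ℝ)).symm (fun k => z k.succ) with hbvec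
    have key : ∀ z ∈ Tᗮ, ∀ j : Fin 4,
        z 0 * ‖X j‖ ^ 2 + inner ℝ (X j) (bvec z) =
          z 0 * ‖X 0‖ ^ 2 + (inner ℝ (X 0) (bvec z) : ℝ) := by
      intro z hz
      apply aux_chain_const (G := fun p => z 0 * ‖p‖ ^ 2 + inner ℝ p (bvec z))
      intro i
      have hmemT : L (M i) ∈ T :=
        Submodule.mem_map_of_mem (Submodule.subset_span (Set.mem_range_self _))
      have h0 : (inner ℝ (L (M i)) z : ℝ) = 0 := (Submodule.mem_orthogonal T z).mp hz _ hmemT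
      have hexp : (inner ℝ (L (M i)) z : ℝ) =
          (z 0 * ‖X i.castSucc‖ ^ 2 + inner ℝ (X i.castSucc) (bvec z)) -
            (z 0 * ‖X i.succ‖ ^ 2 + inner ℝ (X i.succ) (bvec z)) := by
        simp only [PiLp.inner_apply, RCLike.inner_apply, conj_trivial, hL, hbvec,
          WithLp.linearEquiv_symm_apply, WithLp.equiv_symm_apply, PiLp.toLp_apply]
        rw [Fin.sum_univ_succ]
        change z 0 * M i 0 + ∑ x : Fin 3, z x.succ * M i x.succ = _
        simp only [hM, Fin.cases_zero, Fin.cases_succ, PiLp.sub_apply, sub_mul, mul_sub]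
        rw [Finset.sum_sub_distrib]
        ring
      simp only []
      linarith [hexp, h0]
    have sphereCase : ∀ u v : EuclideanSpace ℝ (Fin 4), u ∈ Tᗮ → v ∈ Tᗮ → u 0 ≠ 0 →
        (∀ c d : ℝ, c • u + d • v = 0 → c = 0 ∧ d = 0) →
        ConcyclicOrCollinear (Set.range X) := by
      intro u v huT hvT hu0 hind
      left
      constructor
      · refine aux_cospherical (a := u 0) (b := bvec u)
          (k := u 0 * ‖X 0‖ ^ 2 + inner ℝ (X 0) (bvec u)) hu0 ?_
        rintro p ⟨j, rfl⟩
        exact key u huT j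
      · set w : EuclideanSpace ℝ (Fin 4) := u 0 • v - v 0 • u with hw
        have hwT : w ∈ Tᗮ :=
          Submodule.sub_mem _ (Submodule.smul_mem _ _ hvT) (Submodule.smul_mem _ _ huT)
        have hw0 : w 0 = 0 := by
          simp only [hw, PiLp.sub_apply, PiLp.smul_apply, smul_eq_mul]
          ring
        have hwne : w ≠ 0 := by
          intro h0
          have hcomb : (-(v 0)) • u + u 0 • v = 0 := by
            rw [← h0, hw]; module
          exact hu0 (hind _ _ hcomb).2
        have hbne : bvec w ≠ 0 := by
          intro hb
          apply hwne
          apply (WithLp.equiv 2 (Fin 4 → ℝ)).injective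
          funext j
          refine Fin.cases ?_ (fun k => ?_) j
          · simpa using hw0
          · have := congrArg (fun t => (WithLp.equiv 2 (Fin 3 → ℝ)) t k) hb
            simpa [hbvec] using this
        refine aux_coplanar (b := bvec w) hbne (k := inner ℝ (X 0) (bvec w)) ?_
        rintro p ⟨j, rfl⟩
        have hk := key w hwT j
        rw [hw0] at hk
        simpa using hk
    by_cases h00 : Y 0 0 = 0
    · by_cases h10 : Y 1 0 = 0
      · -- collinear case
        right
        set jmap : E →ₗ[ℝ] EuclideanSpace ℝ (Fin 4) :=
          (L : (Fin 4 → ℝ) →ₗ[ℝ] EuclideanSpace ℝ (Fin 4)) ∘ₗ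
            LinearMap.pi (Fin.cons (0 : E →ₗ[ℝ] ℝ)
              (fun k => PiLp.projₗ 2 (fun _ : Fin 3 => ℝ) k)) with hjmap
        have hjY : ∀ i : Fin 2, jmap (bvec (Y i)) = Y i := by
          intro i
          apply (WithLp.equiv 2 (Fin 4 → ℝ)).injective
          funext j
          refine Fin.cases ?_ (fun k => ?_) j
          · have : Y i 0 = 0 := by fin_cases i <;> assumption
            simp [hjmap, hL, this]
          · simp [hjmap, hL, hbvec]
        have hbind : LinearIndependent ℝ (fun i : Fin 2 => bvec (Y i)) := by
          apply LinearIndependent.of_comp jmap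
          have : (jmap ∘ fun i : Fin 2 => bvec (Y i)) = Y := funext hjY
          rw [this]
          exact hY
        refine aux_collinear hbind (k := fun i => inner ℝ (X 0) (bvec (Y i))) ?_
        rintro i p ⟨j, rfl⟩
        have hk := key (Y i) (hYmem i) j
        have hz0 : Y i 0 = 0 := by fin_cases i <;> assumption
        rw [hz0] at hk
        simpa using hk
      · -- Y 1 has nonzero first coordinate
        refine sphereCase (Y 1) (Y 0) (hYmem 1) (hYmem 0) h10 ?_
        intro c d hcd
        have := hpair d c (by rw [add_comm]; exact hcd)
        exact ⟨this.2, this.1⟩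
    · exact sphereCase (Y 0) (Y 1) (hYmem 0) (hYmem 1) h00 hpair
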